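/- arXiv:2404.01005 — 2 statements merged into one kernel-verified Lean document; each statement's English description precedes it below -/
import Mathlib

section
/- Let η(ξ) = ∫₀^∞ (4t/τ²)e^{-2t/τ} φ(ξ+ct) dt and ζ(ξ) = ∫₀^∞ (4/τ)e^{-2t/τ} φ(ξ+ct) dt for a bounded continuously differentiable function φ, with c, τ > 0. Then η'(ξ) = (1/(cτ))(2η(ξ) - ζ(ξ)) and ζ'(ξ) = (1/(cτ))(2ζ(ξ) - 4φ(ξ)). -/
open MeasureTheory Set Filter Real Topology

section helpers

variable {τ : ℝ}

lemma tendsto_texp (hτ : 0 < τ) :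
    Tendsto (fun t : ℝ => t * Real.exp (-2 * t / τ)) atTop (𝓝 0) := by
  have h := tendsto_rpow_mul_exp_neg_mul_atTop_nhds_zero 1 (2 / τ) (by positivity)
  refine h.congr fun x => ?_
  rw [Real.rpow_one]
  congr 1
  ring_nf

lemma tendsto_exp2 (hτ : 0 < τ) :
    Tendsto (fun t : ℝ => Real.exp (-2 * t / τ)) atTop (𝓝 0) := by
  have h : Tendsto (fun t : ℝ => -(2 / τ) * t) atTop atBot :=
    tendsto_id.const_mul_atTop_of_neg (neg_neg_iff_pos.2 (by positivity))
  have := Real.tendsto_exp_atBot.comp h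
  refine this.congr fun x => ?_
  simp only [Function.comp_apply]
  congr 1
  ring

lemma int_exp (hτ : 0 < τ) :
    IntegrableOn (fun t : ℝ => Real.exp (-2 * t / τ)) (Ioi 0) := by
  have h : (fun t : ℝ => Real.exp (-2 * t / τ)) = fun t => Real.exp (-(2 / τ) * t) := by
    funext t; congr 1; ring
  rw [h]
  exact exp_neg_integrableOn_Ioi 0 (by positivity)

lemma int_texp (hτ : 0 < τ) :
    IntegrableOn (fun t : ℝ => t * Real.exp (-2 * t / τ)) (Ioi 0) := by
  apply integrable_of_isBigO_exp_neg (b := 1 / τ) (by positivity)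
  · exact (continuous_id.mul (by continuity)).continuousOn
  · apply Asymptotics.isBigO_of_div_tendsto_nhds
      (by filter_upwards with x hx; exact absurd hx (Real.exp_ne_zero _))
      (c := 0)
    have h := tendsto_rpow_mul_exp_neg_mul_atTop_nhds_zero 1 (1 / τ) (by positivity)
    refine Tendsto.congr (fun x => ?_) h
    simp only [Pi.div_apply]
    rw [Real.rpow_one, eq_div_iff (Real.exp_ne_zero _), mul_assoc, ← Real.exp_add]
    congr 2
    ring

lemma int_mul_bdd {w ψ : ℝ → ℝ} (hw : IntegrableOn w (Ioi 0)) (hψ : Continuous ψ)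
    {K : ℝ} (hK : ∀ x, |ψ x| ≤ K) :
    IntegrableOn (fun t => w t * ψ t) (Ioi 0) := by
  refine Integrable.mono' (hw.abs.mul_const K)
    (hw.aestronglyMeasurable.mul hψ.aestronglyMeasurable.restrict) ?_
  filter_upwards with t
  rw [Real.norm_eq_abs, abs_mul]
  exact mul_le_mul_of_nonneg_left (hK _) (abs_nonneg _)

/-- Differentiation under the integral sign. -/
lemma deriv_under (c : ℝ) (φ : ℝ → ℝ) (hφ : ContDiff ℝ 1 φ)
    {M M' : ℝ} (hM : ∀ x, |φ x| ≤ M) (hM' : ∀ x, |deriv φ x| ≤ M')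
    (w : ℝ → ℝ) (hw : IntegrableOn w (Ioi 0)) (hwc : Continuous w) (ξ : ℝ) :
    HasDerivAt (fun x => ∫ t in Ioi (0 : ℝ), w t * φ (x + c * t))
      (∫ t in Ioi (0 : ℝ), w t * deriv φ (ξ + c * t)) ξ := by
  have hφc : Continuous φ := hφ.continuous
  have hφ' : Continuous (deriv φ) := hφ.continuous_deriv le_rfl
  have key := hasDerivAt_integral_of_dominated_loc_of_deriv_le (μ := volume.restrict (Ioi 0))
    (F := fun x t => w t * φ (x + c * t)) (F' := fun x t => w t * deriv φ (x + c * t))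
    (x₀ := ξ) (bound := fun t => |w t| * M') (s := Metric.ball ξ 1) (Metric.ball_mem_nhds ξ one_pos)
    ?_ ?_ ?_ ?_ ?_ ?_
  · exact key.2
  · filter_upwards with x
    exact (hwc.mul (hφc.comp (by continuity))).aestronglyMeasurable.restrict
  · exact int_mul_bdd hw (hφc.comp (by continuity)) (fun x => hM _)
  · exact (hwc.mul (hφ'.comp (by continuity))).aestronglyMeasurable.restrict
  · filter_upwards with t
    intro x _
    rw [Real.norm_eq_abs, abs_mul]
    exact mul_le_mul_of_nonneg_left (hM' _) (abs_nonneg _)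
  · exact hw.abs.mul_const M'
  · filter_upwards with t
    intro x _
    have h1 : HasDerivAt (fun x : ℝ => x + c * t) 1 x := (hasDerivAt_id x).add_const (c * t)
    have h2 : HasDerivAt φ (deriv φ (x + c * t)) (x + c * t) :=
      (hφ.differentiable one_ne_zero (x + c * t)).hasDerivAt
    have := (h2.comp x h1).const_mul (w t)
    simpa using this

end helpers

theorem stmt_7 (c τ : ℝ) (hc : 0 < c) (hτ : 0 < τ)
    (φ : ℝ → ℝ) (hφ : ContDiff ℝ 1 φ)
    (hbd : ∃ M : ℝ, ∀ x, |φ x| ≤ M) (hbd' : ∃ M : ℝ, ∀ x, |deriv φ x| ≤ M)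
    (η ζ : ℝ → ℝ)
    (hη : ∀ ξ, η ξ = ∫ t in Set.Ioi (0 : ℝ),
      (4 * t / τ ^ 2) * Real.exp (-2 * t / τ) * φ (ξ + c * t))
    (hζ : ∀ ξ, ζ ξ = ∫ t in Set.Ioi (0 : ℝ),
      (4 / τ) * Real.exp (-2 * t / τ) * φ (ξ + c * t)) :
    ∀ ξ : ℝ,
      HasDerivAt η ((1 / (c * τ)) * (2 * η ξ - ζ ξ)) ξ ∧
      HasDerivAt ζ ((1 / (c * τ)) * (2 * ζ ξ - 4 * φ ξ)) ξ := by
  obtain ⟨M, hM⟩ := hbd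
  obtain ⟨M', hM'⟩ := hbd'
  have hφc : Continuous φ := hφ.continuous
  have hφ' : Continuous (deriv φ) := hφ.continuous_deriv le_rfl
  intro ξ
  -- basic integrals
  set A : ℝ := ∫ t in Ioi (0 : ℝ), Real.exp (-2 * t / τ) * φ (ξ + c * t) with hA
  set B : ℝ := ∫ t in Ioi (0 : ℝ), t * Real.exp (-2 * t / τ) * φ (ξ + c * t) with hB
  set J : ℝ := ∫ t in Ioi (0 : ℝ), Real.exp (-2 * t / τ) * deriv φ (ξ + c * t) with hJ
  set I : ℝ := ∫ t in Ioi (0 : ℝ), t * Real.exp (-2 * t / τ) * deriv φ (ξ + c * t) with hI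
  have hcont1 : Continuous (fun t => φ (ξ + c * t)) := hφc.comp (by continuity)
  have hcont2 : Continuous (fun t => deriv φ (ξ + c * t)) := hφ'.comp (by continuity)
  have i1 : IntegrableOn (fun t => Real.exp (-2 * t / τ) * φ (ξ + c * t)) (Ioi 0) :=
    int_mul_bdd (int_exp hτ) hcont1 (fun x => hM _)
  have i2 : IntegrableOn (fun t => t * Real.exp (-2 * t / τ) * φ (ξ + c * t)) (Ioi 0) := by
    have := int_mul_bdd (int_texp hτ) hcont1 (fun x => hM _)
    exact this.congr (ae_of_all _ fun t => by ring)
  have i3 : IntegrableOn (fun t => Real.exp (-2 * t / τ) * deriv φ (ξ + c * t)) (Ioi 0) :=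
    int_mul_bdd (int_exp hτ) hcont2 (fun x => hM' _)
  have i4 : IntegrableOn (fun t => t * Real.exp (-2 * t / τ) * deriv φ (ξ + c * t)) (Ioi 0) := by
    have := int_mul_bdd (int_texp hτ) hcont2 (fun x => hM' _)
    exact this.congr (ae_of_all _ fun t => by ring)
  -- integration by parts no. 1
  have E1 : A - (2 / τ) * B + c * I = 0 := by
    have hderiv : ∀ t ∈ Ici (0 : ℝ),
        HasDerivAt (fun t => t * Real.exp (-2 * t / τ) * φ (ξ + c * t))
          (Real.exp (-2 * t / τ) * φ (ξ + c * t)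
            - (2 / τ) * (t * Real.exp (-2 * t / τ) * φ (ξ + c * t))
            + c * (t * Real.exp (-2 * t / τ) * deriv φ (ξ + c * t))) t := by
      intro t _
      have hlin : HasDerivAt (fun t : ℝ => -2 * t / τ) (-2 / τ) t := by
        simpa using ((hasDerivAt_id t).const_mul (-2 : ℝ)).div_const τ
      have hE : HasDerivAt (fun t : ℝ => Real.exp (-2 * t / τ))
          (Real.exp (-2 * t / τ) * (-2 / τ)) t := hlin.exp
      have hin : HasDerivAt (fun t : ℝ => ξ + c * t) c t := by
        simpa using (((hasDerivAt_id t).const_mul c).const_add ξ)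
      have hP : HasDerivAt (fun t : ℝ => φ (ξ + c * t)) (deriv φ (ξ + c * t) * c) t :=
        ((hφ.differentiable one_ne_zero (ξ + c * t)).hasDerivAt).comp t hin
      have := (((hasDerivAt_id t).fun_mul hE).fun_mul hP)
      simp only [id_eq] at this
      exact this.congr_deriv (by ring)
    have hint : IntegrableOn (fun t =>
        Real.exp (-2 * t / τ) * φ (ξ + c * t)
          - (2 / τ) * (t * Real.exp (-2 * t / τ) * φ (ξ + c * t))
          + c * (t * Real.exp (-2 * t / τ) * deriv φ (ξ + c * t))) (Ioi 0) :=
      (i1.sub (i2.const_mul _)).add (i4.const_mul _)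
    have htend : Tendsto (fun t => t * Real.exp (-2 * t / τ) * φ (ξ + c * t)) atTop (𝓝 0) := by
      apply squeeze_zero_norm' (a := fun t => t * Real.exp (-2 * t / τ) * M)
      · filter_upwards [eventually_ge_atTop (0 : ℝ)] with t ht
        rw [Real.norm_eq_abs, abs_mul, abs_mul]
        have h1 : |t| = t := abs_of_nonneg ht
        have h2 : |Real.exp (-2 * t / τ)| = Real.exp (-2 * t / τ) := abs_of_nonneg (Real.exp_pos _).le
        rw [h1, h2]
        exact mul_le_mul_of_nonneg_left (hM _) (by positivity)
      · simpa using (tendsto_texp hτ).mul_const M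
    have hval := integral_Ioi_of_hasDerivAt_of_tendsto' hderiv hint htend
    have e1 : (∫ t in Ioi (0 : ℝ), (Real.exp (-2 * t / τ) * φ (ξ + c * t)
          - (2 / τ) * (t * Real.exp (-2 * t / τ) * φ (ξ + c * t))
          + c * (t * Real.exp (-2 * t / τ) * deriv φ (ξ + c * t))))
        = (∫ t in Ioi (0 : ℝ), (Real.exp (-2 * t / τ) * φ (ξ + c * t)
          - (2 / τ) * (t * Real.exp (-2 * t / τ) * φ (ξ + c * t))))
          + ∫ t in Ioi (0 : ℝ), c * (t * Real.exp (-2 * t / τ) * deriv φ (ξ + c * t)) :=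
      integral_add (i1.sub (i2.const_mul _)) (i4.const_mul _)
    have e2 : (∫ t in Ioi (0 : ℝ), (Real.exp (-2 * t / τ) * φ (ξ + c * t)
          - (2 / τ) * (t * Real.exp (-2 * t / τ) * φ (ξ + c * t))))
        = A - ∫ t in Ioi (0 : ℝ), (2 / τ) * (t * Real.exp (-2 * t / τ) * φ (ξ + c * t)) :=
      integral_sub i1 (i2.const_mul _)
    have e3 : (∫ t in Ioi (0 : ℝ), (2 / τ) * (t * Real.exp (-2 * t / τ) * φ (ξ + c * t)))
        = (2 / τ) * B := integral_const_mul _ _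
    have e4 : (∫ t in Ioi (0 : ℝ), c * (t * Real.exp (-2 * t / τ) * deriv φ (ξ + c * t)))
        = c * I := integral_const_mul _ _
    rw [e1, e2, e3, e4] at hval
    simpa using hval
  -- integration by parts no. 2
  have E2 : -(2 / τ) * A + c * J = -φ ξ := by
    have hderiv : ∀ t ∈ Ici (0 : ℝ),
        HasDerivAt (fun t => Real.exp (-2 * t / τ) * φ (ξ + c * t))
          (-(2 / τ) * (Real.exp (-2 * t / τ) * φ (ξ + c * t))
            + c * (Real.exp (-2 * t / τ) * deriv φ (ξ + c * t))) t := by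
      intro t _
      have hlin : HasDerivAt (fun t : ℝ => -2 * t / τ) (-2 / τ) t := by
        simpa using ((hasDerivAt_id t).const_mul (-2 : ℝ)).div_const τ
      have hE : HasDerivAt (fun t : ℝ => Real.exp (-2 * t / τ))
          (Real.exp (-2 * t / τ) * (-2 / τ)) t := hlin.exp
      have hin : HasDerivAt (fun t : ℝ => ξ + c * t) c t := by
        simpa using (((hasDerivAt_id t).const_mul c).const_add ξ)
      have hP : HasDerivAt (fun t : ℝ => φ (ξ + c * t)) (deriv φ (ξ + c * t) * c) t :=
        ((hφ.differentiable one_ne_zero (ξ + c * t)).hasDerivAt).comp t hin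
      have := hE.fun_mul hP
      exact this.congr_deriv (by ring)
    have hint : IntegrableOn (fun t =>
        -(2 / τ) * (Real.exp (-2 * t / τ) * φ (ξ + c * t))
          + c * (Real.exp (-2 * t / τ) * deriv φ (ξ + c * t))) (Ioi 0) :=
      (i1.const_mul _).add (i3.const_mul _)
    have htend : Tendsto (fun t => Real.exp (-2 * t / τ) * φ (ξ + c * t)) atTop (𝓝 0) := by
      apply squeeze_zero_norm' (a := fun t => Real.exp (-2 * t / τ) * M)
      · filter_upwards with t
        rw [Real.norm_eq_abs, abs_mul,
          abs_of_nonneg (Real.exp_pos (-2 * t / τ)).le]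
        exact mul_le_mul_of_nonneg_left (hM _) (Real.exp_pos _).le
      · simpa using (tendsto_exp2 hτ).mul_const M
    have hval := integral_Ioi_of_hasDerivAt_of_tendsto' hderiv hint htend
    have e1 : (∫ t in Ioi (0 : ℝ), (-(2 / τ) * (Real.exp (-2 * t / τ) * φ (ξ + c * t))
          + c * (Real.exp (-2 * t / τ) * deriv φ (ξ + c * t))))
        = (∫ t in Ioi (0 : ℝ), -(2 / τ) * (Real.exp (-2 * t / τ) * φ (ξ + c * t)))
          + ∫ t in Ioi (0 : ℝ), c * (Real.exp (-2 * t / τ) * deriv φ (ξ + c * t)) :=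
      integral_add (i1.const_mul _) (i3.const_mul _)
    have e2 : (∫ t in Ioi (0 : ℝ), -(2 / τ) * (Real.exp (-2 * t / τ) * φ (ξ + c * t)))
        = -(2 / τ) * A := integral_const_mul _ _
    have e3 : (∫ t in Ioi (0 : ℝ), c * (Real.exp (-2 * t / τ) * deriv φ (ξ + c * t)))
        = c * J := integral_const_mul _ _
    rw [e1, e2, e3] at hval
    simpa using hval
  -- values of η and ζ at ξ
  have hηξ : η ξ = (4 / τ ^ 2) * B := by
    rw [hη ξ, hB, ← integral_const_mul]
    congr 1
    funext t
    ring
  have hζξ : ζ ξ = (4 / τ) * A := by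
    rw [hζ ξ, hA, ← integral_const_mul]
    congr 1
    funext t
    ring
  -- derivative of η
  have hηfun : η = fun x => ∫ t in Ioi (0 : ℝ),
      (4 * t / τ ^ 2 * Real.exp (-2 * t / τ)) * φ (x + c * t) := by
    funext x
    rw [hη x]
  have hζfun : ζ = fun x => ∫ t in Ioi (0 : ℝ),
      (4 / τ * Real.exp (-2 * t / τ)) * φ (x + c * t) := by
    funext x
    rw [hζ x]
  have hw1 : IntegrableOn (fun t : ℝ => 4 * t / τ ^ 2 * Real.exp (-2 * t / τ)) (Ioi 0) := by
    have := (int_texp hτ).const_mul (4 / τ ^ 2)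
    exact this.congr (ae_of_all _ fun t => by ring)
  have hw2 : IntegrableOn (fun t : ℝ => 4 / τ * Real.exp (-2 * t / τ)) (Ioi 0) :=
    (int_exp hτ).const_mul (4 / τ)
  have hd1 := deriv_under c φ hφ hM hM'
      (fun t : ℝ => 4 * t / τ ^ 2 * Real.exp (-2 * t / τ)) hw1 (by fun_prop) ξ
  have hd2 := deriv_under c φ hφ hM hM'
      (fun t : ℝ => 4 / τ * Real.exp (-2 * t / τ)) hw2 (by fun_prop) ξ
  rw [← hηfun] at hd1
  rw [← hζfun] at hd2
  have hv1 : (∫ t in Ioi (0 : ℝ),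
      (4 * t / τ ^ 2 * Real.exp (-2 * t / τ)) * deriv φ (ξ + c * t)) = (4 / τ ^ 2) * I := by
    rw [hI, ← integral_const_mul]
    congr 1
    funext t
    ring
  have hv2 : (∫ t in Ioi (0 : ℝ),
      (4 / τ * Real.exp (-2 * t / τ)) * deriv φ (ξ + c * t)) = (4 / τ) * J := by
    rw [hJ, ← integral_const_mul]
    congr 1
    funext t
    ring
  rw [hv1] at hd1
  rw [hv2] at hd2
  constructor
  · have heq : (1 / (c * τ)) * (2 * η ξ - ζ ξ) = (4 / τ ^ 2) * I := by
      have hIeq : I = ((2 / τ) * B - A) / c := by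
        rw [eq_div_iff hc.ne']
        linarith
      rw [hηξ, hζξ, hIeq]
      field_simp
    rw [heq]
    exact hd1
  · have heq : (1 / (c * τ)) * (2 * ζ ξ - 4 * φ ξ) = (4 / τ) * J := by
      have hJeq : J = ((2 / τ) * A - φ ξ) / c := by
        rw [eq_div_iff hc.ne']
        linarith
      rw [hζξ, hJeq]
      field_simp
    rw [heq]
    exact hd2
end

section
/- With b = 1, a = -1, k = -1, the Melnikov integral M(c) = (2/c)∫₀^{3c/2} (-2cφ + 1)·√((−2φ³ + 3cφ²)/(3c)) dφ evaluates to M(c) = −(72/35)c³ + (6/5)c for all c > 0. -/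
private lemma stmt10_key (c x u v : ℝ) (hu : u ≠ 0) (hv : v ≠ 0) (hu2 : u^2 = 3*c - 2*x) :
    (1/(2*u) * -2 * ((3*c^3/2 - c/2)*(3*c-2*x) - (3*c^2/5 - 1/10)*(3*c-2*x)^2 + (c/14)*(3*c-2*x)^3)
      + u * ((3*c^3/2 - c/2 - (3*c^2/5 - 1/10)*(2*(3*c-2*x)) + (c/14)*(3*(3*c-2*x)^2)) * -2)) / v
    = (-2*c*x + 1) * (x * u / v) := by
  have hnum : 1/(2*u) * -2 * ((3*c^3/2 - c/2)*(3*c-2*x) - (3*c^2/5 - 1/10)*(3*c-2*x)^2 + (c/14)*(3*c-2*x)^3)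
      + u * ((3*c^3/2 - c/2 - (3*c^2/5 - 1/10)*(2*(3*c-2*x)) + (c/14)*(3*(3*c-2*x)^2)) * -2)
      = (-2*c*x + 1) * (x * u) := by
    field_simp
    linear_combination (-2*(14*(c*(3*c^2-1)*50 - 4*(3*c-2*x)*(30*c^2-5)) + 6*c*(3*c-2*x)^2*50) - 1400*x*(-2*c*x+1)) * hu2
  rw [show (-2*c*x + 1) * (x * u / v) = ((-2*c*x + 1) * (x * u)) / v by ring, ← hnum]

private lemma stmt10_int (c : ℝ) (hc : 0 < c) :
    ∫ φ in (0 : ℝ)..(3 * c / 2),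
        (-2 * c * φ + 1) * Real.sqrt ((-2 * φ ^ 3 + 3 * c * φ ^ 2) / (3 * c))
      = -(36/35)*c^4 + (3/5)*c^2 := by
  have h3c : (0:ℝ) < 3*c := by linarith
  have hv : Real.sqrt (3*c) ≠ 0 := by positivity
  have hgc : Continuous fun φ : ℝ => (-2 * c * φ + 1) * Real.sqrt ((-2 * φ ^ 3 + 3 * c * φ ^ 2) / (3 * c)) := by
    apply Continuous.mul (by continuity)
    exact Real.continuous_sqrt.comp (by continuity)
  have hle : (0:ℝ) ≤ 3*c/2 := by linarith
  have key : ∫ φ in (0 : ℝ)..(3 * c / 2),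
        (-2 * c * φ + 1) * Real.sqrt ((-2 * φ ^ 3 + 3 * c * φ ^ 2) / (3 * c))
      = (fun x : ℝ => Real.sqrt (3*c - 2*x) *
          ((3*c^3/2 - c/2)*(3*c-2*x) - (3*c^2/5 - 1/10)*(3*c-2*x)^2 + (c/14)*(3*c-2*x)^3) / Real.sqrt (3*c)) (3*c/2)
        - (fun x : ℝ => Real.sqrt (3*c - 2*x) *
          ((3*c^3/2 - c/2)*(3*c-2*x) - (3*c^2/5 - 1/10)*(3*c-2*x)^2 + (c/14)*(3*c-2*x)^3) / Real.sqrt (3*c)) 0 := by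
    apply intervalIntegral.integral_eq_sub_of_hasDerivAt_of_le (f := fun x : ℝ => Real.sqrt (3*c - 2*x) *
          ((3*c^3/2 - c/2)*(3*c-2*x) - (3*c^2/5 - 1/10)*(3*c-2*x)^2 + (c/14)*(3*c-2*x)^3) / Real.sqrt (3*c))
        (f' := fun φ : ℝ => (-2 * c * φ + 1) * Real.sqrt ((-2 * φ ^ 3 + 3 * c * φ ^ 2) / (3 * c))) hle
    · apply Continuous.continuousOn
      apply Continuous.div_const
      exact Continuous.mul (Real.continuous_sqrt.comp (by continuity)) (by continuity)
    · intro x hx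
      obtain ⟨hx0, hx1⟩ := hx
      have ht : (0:ℝ) < 3*c - 2*x := by linarith
      have hupos : 0 < Real.sqrt (3*c - 2*x) := Real.sqrt_pos.mpr ht
      have hu2 : Real.sqrt (3*c - 2*x) ^ 2 = 3*c - 2*x := Real.sq_sqrt ht.le
      have h1 : HasDerivAt (fun y : ℝ => 3*c - 2*y) (-2) x := by
        simpa using ((hasDerivAt_id x).const_mul (2:ℝ)).const_sub (3*c)
      have hs : HasDerivAt (fun y => Real.sqrt (3*c - 2*y)) (1/(2*Real.sqrt (3*c-2*x)) * (-2)) x :=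
        (Real.hasDerivAt_sqrt ht.ne').comp x h1
      have hP : HasDerivAt (fun t : ℝ => (3*c^3/2 - c/2)*t - (3*c^2/5 - 1/10)*t^2 + (c/14)*t^3)
          ((3*c^3/2 - c/2) - (3*c^2/5 - 1/10)*(2*(3*c-2*x)) + (c/14)*(3*(3*c-2*x)^2)) (3*c-2*x) := by
        have := (((hasDerivAt_id (3*c-2*x)).const_mul (3*c^3/2 - c/2)).sub
          (((hasDerivAt_pow 2 (3*c-2*x))).const_mul (3*c^2/5 - 1/10))).add
          (((hasDerivAt_pow 3 (3*c-2*x))).const_mul (c/14))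
        refine this.congr_deriv ?_
        norm_num
      have hPC : HasDerivAt (fun y : ℝ => (3*c^3/2 - c/2)*(3*c-2*y) - (3*c^2/5 - 1/10)*(3*c-2*y)^2 + (c/14)*(3*c-2*y)^3)
          (((3*c^3/2 - c/2) - (3*c^2/5 - 1/10)*(2*(3*c-2*x)) + (c/14)*(3*(3*c-2*x)^2)) * (-2)) x :=
        by have := hP.comp x h1; exact this
      have hF' := (hs.mul hPC).div_const (Real.sqrt (3*c))
      have hsq : Real.sqrt ((-2 * x ^ 3 + 3 * c * x ^ 2) / (3 * c)) = x * Real.sqrt (3*c-2*x) / Real.sqrt (3*c) := by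
        rw [show (-2 * x ^ 3 + 3 * c * x ^ 2) / (3 * c) = x^2 * ((3*c - 2*x) / (3*c)) by
            field_simp; ring,
          Real.sqrt_mul (sq_nonneg x), Real.sqrt_sq hx0.le, Real.sqrt_div (by positivity : (0:ℝ) ≤ 3*c - 2*x)]
        ring
      refine hF'.congr_deriv ?_
      rw [hsq, ← stmt10_key c x (Real.sqrt (3*c-2*x)) (Real.sqrt (3*c)) hupos.ne' hv hu2]
    · exact hgc.intervalIntegrable 0 (3*c/2)
  rw [key]
  simp only
  have e1 : (3*c - 2*(3*c/2)) = 0 := by ring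
  have e0 : (3*c - 2*(0:ℝ)) = 3*c := by ring
  rw [e1, e0, Real.sqrt_zero, zero_mul, zero_div, zero_sub]
  rw [mul_comm, mul_div_assoc, div_self hv, mul_one]
  ring

/-- with b = 1, a = -1, k = -1, the local-delay Melnikov integral
evaluates to −(72/35)c³ + (6/5)c for all c > 0. -/
theorem stmt_10 (c : ℝ) (hc : 0 < c) :
    (2 / c) * ∫ φ in (0 : ℝ)..(3 * c / 2),
        (-2 * c * φ + 1) * Real.sqrt ((-2 * φ ^ 3 + 3 * c * φ ^ 2) / (3 * c))
      = -(72 / 35) * c ^ 3 + (6 / 5) * c := by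
  rw [stmt10_int c hc]
  field_simp
  ring
end
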